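/- Let 𝒜 be a real-linear map from the real vector space of n×n complex Hermitian matrices to ℝᵐ and let b ∈ ℝᵐ be such that there exists a Hermitian positive semidefinite X with 𝒜X = b. Then strong duality holds for the trace-minimization SDP: inf{trace(X) : X Hermitian PSD, 𝒜X = b} = sup_{y ∈ ℝᵐ} inf{trace(X) + ⟨y, b − 𝒜X⟩ : X Hermitian PSD}. -/

import Mathlib

open scoped RealInnerProductSpace ComplexOrder

namespace SDPAux
open Matrix

attribute [local instance] Matrix.normedAddCommGroup Matrix.normedSpace

variable {n : ℕ}

abbrev Mn (n : ℕ) := Matrix (Fin n) (Fin n) ℂ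

noncomputable def traceRe (n : ℕ) : Mn n →ₗ[ℝ] ℝ :=
  Complex.reLm.comp (Matrix.traceLinearMap (Fin n) ℝ ℂ)

@[simp] lemma traceRe_apply (A : Mn n) : traceRe n A = A.trace.re := rfl

noncomputable def hermLm (n : ℕ) : Mn n →ₗ[ℝ] selfAdjoint (Mn n) where
  toFun A := ⟨(1/2 : ℝ) • (A + Aᴴ), by
    simp only [selfAdjoint.mem_iff, star_smul, star_trivial, star_add,
      Matrix.star_eq_conjTranspose, Matrix.conjTranspose_conjTranspose]
    rw [add_comm]⟩
  map_add' A B := by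
    ext1
    simp only [AddSubgroup.coe_add, Matrix.conjTranspose_add]
    module
  map_smul' r A := by
    ext1
    simp only [RingHom.id_apply, selfAdjoint.val_smul, Matrix.conjTranspose_smul,
      star_trivial]
    module

lemma hermLm_self (X : selfAdjoint (Mn n)) : hermLm n (X : Mn n) = X := by
  ext1
  show (1/2 : ℝ) • ((X : Mn n) + (X : Mn n)ᴴ) = (X : Mn n)
  rw [show ((X : Mn n)ᴴ) = (X : Mn n) from X.2, smul_add]
  module

lemma posSemidef_smul {A : Mn n} (hA : A.PosSemidef) {r : ℝ} (hr : 0 ≤ r) :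
    (r • A).PosSemidef := by
  refine Matrix.PosSemidef.of_dotProduct_mulVec_nonneg ?_ fun x => ?_
  · rw [Matrix.IsHermitian, Matrix.conjTranspose_smul, star_trivial, hA.1]
  · rw [Matrix.smul_mulVec, dotProduct_smul]
    rw [Complex.real_smul]
    exact mul_nonneg (by exact_mod_cast hr) (hA.dotProduct_mulVec_nonneg x)

lemma star_quad {A : Mn n} (hH : A.IsHermitian) (x : Fin n → ℂ) :
    star (star x ⬝ᵥ A *ᵥ x) = star x ⬝ᵥ A *ᵥ x := by
  calc star (star x ⬝ᵥ A *ᵥ x) = star (star (star (A *ᵥ x) ⬝ᵥ x)) := by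
        rw [Matrix.star_dotProduct]
    _ = star (A *ᵥ x) ⬝ᵥ x := star_star _
    _ = (star x ᵥ* Aᴴ) ⬝ᵥ x := by rw [Matrix.star_mulVec]
    _ = star x ⬝ᵥ A *ᵥ x := by rw [Matrix.IsHermitian.eq hH, ← Matrix.dotProduct_mulVec]


lemma posSemidef_iff_herm_re {A : Mn n} :
    A.PosSemidef ↔ A.IsHermitian ∧ ∀ x : Fin n → ℂ, 0 ≤ (star x ⬝ᵥ A *ᵥ x).re := by
  constructor
  · rintro ⟨hH, h⟩
    exact ⟨hH, fun x => by simpa [Complex.le_def] using (Complex.le_def.mp (Matrix.PosSemidef.dotProduct_mulVec_nonneg ⟨hH, h⟩ x)).1⟩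
  · rintro ⟨hH, h⟩
    refine Matrix.PosSemidef.of_dotProduct_mulVec_nonneg hH fun x => ?_
    rw [Complex.le_def]
    refine ⟨by simpa using h x, ?_⟩
    have := star_quad hH x
    have h2 := congrArg Complex.im this
    simp only [Complex.star_def, Complex.conj_im] at h2
    show (0:ℂ).im = _
    rw [Complex.zero_im]
    linarith

/-- the `ℝ`-linear map `A ↦ Aᴴ - A`. -/
noncomputable def chLm (n : ℕ) : Mn n →ₗ[ℝ] Mn n where
  toFun A := Aᴴ - A
  map_add' A B := by rw [Matrix.conjTranspose_add]; abel
  map_smul' r A := by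
    simp only [Matrix.conjTranspose_smul, star_trivial, RingHom.id_apply, smul_sub]

/-- the `ℝ`-linear map `A ↦ re (xᴴ A x)`. -/
noncomputable def quadLm (x : Fin n → ℂ) : Mn n →ₗ[ℝ] ℝ where
  toFun A := (star x ⬝ᵥ A *ᵥ x).re
  map_add' A B := by simp [Matrix.add_mulVec, dotProduct_add]
  map_smul' r A := by
    simp [Matrix.smul_mulVec, dotProduct_smul, Complex.real_smul]

lemma isClosed_psd : IsClosed {A : Mn n | A.PosSemidef} := by
  haveI : FiniteDimensional ℝ (Mn n) := Module.Finite.trans ℂ (Mn n)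
  have h1 : IsClosed {A : Mn n | A.IsHermitian} := by
    have : {A : Mn n | A.IsHermitian} = (chLm n) ⁻¹' {0} := by
      ext A
      simp [Matrix.IsHermitian, chLm, LinearMap.coe_mk, AddHom.coe_mk, sub_eq_zero]
    rw [this]
    exact IsClosed.preimage (chLm n).continuous_of_finiteDimensional isClosed_singleton
  have h2 : ∀ x : Fin n → ℂ, IsClosed {A : Mn n | 0 ≤ (star x ⬝ᵥ A *ᵥ x).re} := by
    intro x
    have : {A : Mn n | 0 ≤ (star x ⬝ᵥ A *ᵥ x).re} = (quadLm x) ⁻¹' (Set.Ici 0) := rfl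
    rw [this]
    exact IsClosed.preimage (quadLm x).continuous_of_finiteDimensional isClosed_Ici
  have : {A : Mn n | A.PosSemidef}
      = {A : Mn n | A.IsHermitian} ∩ ⋂ x : Fin n → ℂ, {A : Mn n | 0 ≤ (star x ⬝ᵥ A *ᵥ x).re} := by
    ext A
    simp only [Set.mem_setOf_eq, Set.mem_inter_iff, Set.mem_iInter, posSemidef_iff_herm_re]
  rw [this]
  exact h1.inter (isClosed_iInter h2)


lemma diag_re (B : Mn n) (i : Fin n) :
    ((Bᴴ * B) i i).re = ∑ k, ‖B k i‖ ^ 2 := by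
  rw [Matrix.mul_apply, Complex.re_sum]
  refine Finset.sum_congr rfl fun k _ => ?_
  rw [Matrix.conjTranspose_apply]
  rw [Complex.star_def, Complex.conj_mul']
  simp [Complex.normSq_eq_norm_sq, ← Complex.ofReal_pow]

lemma trace_re_eq (B : Mn n) :
    (Bᴴ * B).trace.re = ∑ i, ∑ k, ‖B k i‖ ^ 2 := by
  rw [Matrix.trace, Complex.re_sum]
  exact Finset.sum_congr rfl fun i _ => diag_re B i

lemma col_sq_le (B : Mn n) (i : Fin n) :
    ∑ k, ‖B k i‖ ^ 2 ≤ (Bᴴ * B).trace.re := by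
  rw [trace_re_eq]
  exact Finset.single_le_sum (f := fun i => ∑ k, ‖B k i‖ ^ 2)
    (fun i _ => Finset.sum_nonneg fun k _ => sq_nonneg _) (Finset.mem_univ i)

lemma trace_re_nonneg {A : Mn n} (hA : A.PosSemidef) : 0 ≤ A.trace.re := by
  obtain ⟨B, rfl⟩ : ∃ B : Mn n, A = Bᴴ * B := by
    open scoped MatrixOrder in
    obtain ⟨B, hB⟩ := CStarAlgebra.nonneg_iff_eq_star_mul_self.mp hA.nonneg
    exact ⟨B, hB⟩
  rw [trace_re_eq]
  exact Finset.sum_nonneg fun i _ => Finset.sum_nonneg fun k _ => sq_nonneg _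

lemma entry_le_trace {A : Mn n} (hA : A.PosSemidef) (i j : Fin n) :
    ‖A i j‖ ≤ A.trace.re := by
  obtain ⟨B, rfl⟩ : ∃ B : Mn n, A = Bᴴ * B := by
    open scoped MatrixOrder in
    obtain ⟨B, hB⟩ := CStarAlgebra.nonneg_iff_eq_star_mul_self.mp hA.nonneg
    exact ⟨B, hB⟩
  set u : EuclideanSpace ℂ (Fin n) := WithLp.toLp 2 (fun k => B k i) with hu
  set v : EuclideanSpace ℂ (Fin n) := WithLp.toLp 2 (fun k => B k j) with hv
  have hT : 0 ≤ (Bᴴ * B).trace.re := trace_re_nonneg (Matrix.posSemidef_conjTranspose_mul_self B)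
  have hentry : (Bᴴ * B) i j = (inner ℂ u v : ℂ) := by
    rw [Matrix.mul_apply, PiLp.inner_apply]
    refine Finset.sum_congr rfl fun k _ => ?_
    rw [Matrix.conjTranspose_apply]
    simp [hu, hv, RCLike.inner_apply, Complex.star_def, mul_comm]
  have hnu : ‖u‖ ≤ Real.sqrt ((Bᴴ * B).trace.re) := by
    rw [EuclideanSpace.norm_eq]
    exact Real.sqrt_le_sqrt (by simpa using col_sq_le B i)
  have hnv : ‖v‖ ≤ Real.sqrt ((Bᴴ * B).trace.re) := by
    rw [EuclideanSpace.norm_eq]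
    exact Real.sqrt_le_sqrt (by simpa using col_sq_le B j)
  calc ‖(Bᴴ * B) i j‖ = ‖(inner ℂ u v : ℂ)‖ := by rw [hentry]
    _ ≤ ‖u‖ * ‖v‖ := norm_inner_le_norm u v
    _ ≤ Real.sqrt ((Bᴴ * B).trace.re) * Real.sqrt ((Bᴴ * B).trace.re) :=
        mul_le_mul hnu hnv (norm_nonneg _) (Real.sqrt_nonneg _)
    _ = (Bᴴ * B).trace.re := Real.mul_self_sqrt hT

lemma norm_le_trace {A : Mn n} (hA : A.PosSemidef) : ‖A‖ ≤ A.trace.re :=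
  (Matrix.norm_le_iff (trace_re_nonneg hA)).mpr fun i j => entry_le_trace hA i j


variable {m : ℕ}

noncomputable def Fmap (𝒜 : selfAdjoint (Mn n) →ₗ[ℝ] EuclideanSpace ℝ (Fin m)) :
    Mn n →ₗ[ℝ] (EuclideanSpace ℝ (Fin m)) × ℝ :=
  LinearMap.prod (𝒜.comp (hermLm n)) (traceRe n)

lemma convex_psd : Convex ℝ {A : Mn n | A.PosSemidef} := by
  intro A hA B hB a b ha hb _
  exact Matrix.PosSemidef.add (posSemidef_smul hA ha) (posSemidef_smul hB hb)

lemma isClosed_image (𝒜 : selfAdjoint (Mn n) →ₗ[ℝ] EuclideanSpace ℝ (Fin m)) :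
    IsClosed (Fmap 𝒜 '' {A : Mn n | A.PosSemidef}) := by
  haveI : FiniteDimensional ℝ (Mn n) := Module.Finite.trans ℂ (Mn n)
  haveI : ProperSpace (Mn n) := FiniteDimensional.proper ℝ (Mn n)
  refine IsSeqClosed.isClosed ?_
  intro x p hx hp
  choose A hA hFA using hx
  have h2 : Filter.Tendsto (fun k => (x k).2) Filter.atTop (nhds p.2) :=
    ((continuous_snd.tendsto p).comp hp)
  obtain ⟨c, hc⟩ := h2.bddAbove_range
  set r := max c 0 with hr
  have hmem : ∀ k, A k ∈ Metric.closedBall (0 : Mn n) r ∩ {A : Mn n | A.PosSemidef} := by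
    intro k
    refine ⟨?_, hA k⟩
    rw [Metric.mem_closedBall, dist_zero_right]
    have h3 : (A k).trace.re = (x k).2 := by rw [← hFA k]; rfl
    have h4 : (x k).2 ≤ c := hc (Set.mem_range_self k)
    have := norm_le_trace (hA k)
    exact this.trans (by rw [h3]; exact h4.trans (le_max_left _ _))
  have hbd : Bornology.IsBounded
      (Metric.closedBall (0 : Mn n) r ∩ {A : Mn n | A.PosSemidef}) :=
    Metric.isBounded_closedBall.subset Set.inter_subset_left
  obtain ⟨a, ha, φ, hφ, hconv⟩ := tendsto_subseq_of_bounded hbd hmem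
  have hclosed : IsClosed (Metric.closedBall (0 : Mn n) r ∩ {A : Mn n | A.PosSemidef}) :=
    Metric.isClosed_closedBall.inter isClosed_psd
  have ha' := hclosed.closure_subset ha
  have ht1 : Filter.Tendsto (fun k => Fmap 𝒜 (A (φ k))) Filter.atTop (nhds (Fmap 𝒜 a)) :=
    (((Fmap 𝒜).continuous_of_finiteDimensional).tendsto a).comp hconv
  have ht2 : Filter.Tendsto (fun k => x (φ k)) Filter.atTop (nhds (Fmap 𝒜 a)) := by
    simpa only [hFA] using ht1
  have ht3 : Filter.Tendsto (fun k => x (φ k)) Filter.atTop (nhds p) :=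
    hp.comp hφ.tendsto_atTop
  exact ⟨a, ha'.2, (tendsto_nhds_unique ht2 ht3)⟩

end SDPAux

open SDPAux

/-- **Strong duality for the trace-minimization (phase-retrieval) SDP.**
Let `𝒜` be a real-linear map from the real vector space of `n×n` complex Hermitian
matrices to `ℝᵐ` and `b ∈ ℝᵐ` such that some Hermitian PSD matrix `X` satisfies
`𝒜X = b`.  Then strong duality holds:
`inf {tr X : X ⪰ 0, 𝒜X = b} = sup_y inf_{X ⪰ 0} (tr X + ⟨y, b - 𝒜X⟩)`
(the trace of a Hermitian matrix being real). -/
theorem trace_sdp_strong_duality {n m : ℕ}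
    (𝒜 : selfAdjoint (Matrix (Fin n) (Fin n) ℂ) →ₗ[ℝ] EuclideanSpace ℝ (Fin m))
    (b : EuclideanSpace ℝ (Fin m))
    (hfeas : ∃ X : selfAdjoint (Matrix (Fin n) (Fin n) ℂ),
      (X : Matrix (Fin n) (Fin n) ℂ).PosSemidef ∧ 𝒜 X = b) :
    sInf {t : EReal | ∃ X : selfAdjoint (Matrix (Fin n) (Fin n) ℂ),
        (X : Matrix (Fin n) (Fin n) ℂ).PosSemidef ∧ 𝒜 X = b ∧
          t = (((X : Matrix (Fin n) (Fin n) ℂ).trace.re : ℝ) : EReal)} =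
      ⨆ y : EuclideanSpace ℝ (Fin m),
        ⨅ (X : selfAdjoint (Matrix (Fin n) (Fin n) ℂ))
          (_ : (X : Matrix (Fin n) (Fin n) ℂ).PosSemidef),
          (((X : Matrix (Fin n) (Fin n) ℂ).trace.re + ⟪y, b - 𝒜 X⟫ : ℝ) : EReal) := by
  classical
  obtain ⟨X₀, hX₀, hAX₀⟩ := hfeas
  set P : Set EReal := {t : EReal | ∃ X : selfAdjoint (Matrix (Fin n) (Fin n) ℂ),
        (X : Matrix (Fin n) (Fin n) ℂ).PosSemidef ∧ 𝒜 X = b ∧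
          t = (((X : Matrix (Fin n) (Fin n) ℂ).trace.re : ℝ) : EReal)} with hPdef
  set D : EReal := ⨆ y : EuclideanSpace ℝ (Fin m),
        ⨅ (X : selfAdjoint (Matrix (Fin n) (Fin n) ℂ))
          (_ : (X : Matrix (Fin n) (Fin n) ℂ).PosSemidef),
          (((X : Matrix (Fin n) (Fin n) ℂ).trace.re + ⟪y, b - 𝒜 X⟫ : ℝ) : EReal) with hDdef
  have h0le : ∀ t ∈ P, (0 : EReal) ≤ t := by
    rintro t ⟨X, hX, -, rfl⟩
    simpa using EReal.coe_le_coe_iff.mpr (trace_re_nonneg hX)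
  have hmem₀ : (((X₀ : Mn n).trace.re : ℝ) : EReal) ∈ P := ⟨X₀, hX₀, hAX₀, rfl⟩
  have hne_top : sInf P ≠ ⊤ := ((sInf_le hmem₀).trans_lt (EReal.coe_lt_top _)).ne
  have hne_bot : sInf P ≠ ⊥ := by
    have : (0 : EReal) ≤ sInf P := le_sInf h0le
    exact fun h => by simp [h] at this
  set pR : ℝ := (sInf P).toReal with hpRdef
  have hp : ((pR : ℝ) : EReal) = sInf P := EReal.coe_toReal hne_top hne_bot
  have weak : D ≤ sInf P := by
    refine iSup_le fun y => le_sInf ?_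
    rintro t ⟨X, hX, hAX, rfl⟩
    refine le_trans (iInf_le _ X) (le_trans (iInf_le _ hX) ?_)
    rw [hAX, sub_self, inner_zero_right, add_zero]
  have strong : sInf P ≤ D := by
    by_contra hcon
    push_neg at hcon
    obtain ⟨z, hz1, hz2⟩ := EReal.exists_between_coe_real hcon
    have hzlt : z < pR := by
      rw [← hp] at hz2
      exact_mod_cast hz2
    obtain ⟨y, hy⟩ : ∃ y : EuclideanSpace ℝ (Fin m), ∀ X : selfAdjoint (Mn n),
        (X : Mn n).PosSemidef → z ≤ (X : Mn n).trace.re + ⟪y, b - 𝒜 X⟫ := by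
      haveI : FiniteDimensional ℝ (Mn n) := Module.Finite.trans ℂ (Mn n)
      set S : Set (EuclideanSpace ℝ (Fin m) × ℝ) := Fmap 𝒜 '' {A : Mn n | A.PosSemidef}
        with hSdef
      have hSconv : Convex ℝ S := convex_psd.linear_image _
      have hSclosed : IsClosed S := isClosed_image 𝒜
      have hnot : ((b, z) : EuclideanSpace ℝ (Fin m) × ℝ) ∉ S := by
        rintro ⟨A, hApsd, hFA⟩
        set X : selfAdjoint (Mn n) := ⟨A, hApsd.1.isSelfAdjoint⟩ with hXdef
        have hherm : hermLm n A = X := hermLm_self X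
        have h1 : 𝒜 X = b := by
          have := congrArg Prod.fst hFA
          simpa [Fmap, hherm] using this
        have h2 : A.trace.re = z := congrArg Prod.snd hFA
        have hmem : ((A.trace.re : ℝ) : EReal) ∈ P := ⟨X, hApsd, h1, rfl⟩
        have hle' := sInf_le hmem
        rw [h2] at hle'
        exact absurd hz2 (not_lt.mpr hle')
      obtain ⟨f, u, hfS, hfx⟩ := geometric_hahn_banach_closed_point hSconv hSclosed hnot
      have h0S : (0 : EuclideanSpace ℝ (Fin m) × ℝ) ∈ S :=
        ⟨0, Matrix.PosSemidef.zero, map_zero _⟩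
      have hu : 0 < u := by simpa using hfS 0 h0S
      have hle : ∀ a ∈ S, f a ≤ 0 := by
        intro a haS
        by_contra hpos
        push_neg at hpos
        obtain ⟨A, hApsd, rfl⟩ := haS
        have hc : (0:ℝ) ≤ u / f (Fmap 𝒜 A) := le_of_lt (div_pos hu hpos)
        have hmem : Fmap 𝒜 ((u / f (Fmap 𝒜 A)) • A) ∈ S :=
          ⟨_, posSemidef_smul hApsd hc, rfl⟩
        have h5 := hfS _ hmem
        rw [map_smul (Fmap 𝒜), map_smul, smul_eq_mul,
          div_mul_cancel₀ u hpos.ne'] at h5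
        exact lt_irrefl u h5
      set y0 : EuclideanSpace ℝ (Fin m) :=
        (InnerProductSpace.toDual ℝ (EuclideanSpace ℝ (Fin m))).symm
          (f.comp (ContinuousLinearMap.inl ℝ _ _)) with hy0def
      have hy0 : ∀ v : EuclideanSpace ℝ (Fin m), ⟪y0, v⟫ = f (v, 0) := by
        intro v
        rw [hy0def, InnerProductSpace.toDual_symm_apply]
        rfl
      set s : ℝ := f (0, 1) with hsdef
      have hdecomp : ∀ (v : EuclideanSpace ℝ (Fin m)) (t : ℝ), f (v, t) = ⟪y0, v⟫ + t * s := by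
        intro v t
        have hvt : ((v, t) : EuclideanSpace ℝ (Fin m) × ℝ)
            = (v, 0) + t • ((0 : EuclideanSpace ℝ (Fin m)), (1:ℝ)) := by
          simp [Prod.ext_iff]
        rw [hvt, map_add, map_smul, smul_eq_mul, hy0 v]
      have hkey : ∀ X : selfAdjoint (Mn n), (X : Mn n).PosSemidef →
          ⟪y0, 𝒜 X⟫ + ((X : Mn n).trace.re) * s ≤ 0 := by
        intro X hX
        have hmem : Fmap 𝒜 (X : Mn n) ∈ S := ⟨(X : Mn n), hX, rfl⟩
        have h6 := hle _ hmem
        have hF : Fmap 𝒜 (X : Mn n) = (𝒜 X, (X : Mn n).trace.re) := by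
          show (𝒜 (hermLm n (X : Mn n)), (X : Mn n).trace.re) = _
          rw [hermLm_self]
        rw [hF, hdecomp] at h6
        exact h6
      have hb0 : u < ⟪y0, b⟫ + z * s := by rw [← hdecomp]; exact hfx
      have ht₀ : pR ≤ (X₀ : Mn n).trace.re := by
        have h7 := sInf_le hmem₀
        rw [← hp] at h7
        exact_mod_cast h7
      have hX₀key := hkey X₀ hX₀
      rw [hAX₀] at hX₀key
      have hslt : s < 0 := by
        by_contra hs
        push_neg at hs
        nlinarith [mul_nonneg (sub_nonneg.mpr (hzlt.le.trans ht₀)) hs]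
      have hsp : 0 < -s := neg_pos.mpr hslt
      refine ⟨(-s)⁻¹ • y0, fun X hX => ?_⟩
      have h1 := hkey X hX
      have h2 : ⟪(-s)⁻¹ • y0, b - 𝒜 X⟫ = (-s)⁻¹ * (⟪y0, b⟫ - ⟪y0, 𝒜 X⟫) := by
        rw [real_inner_smul_left, inner_sub_right]
      rw [h2, ← mul_le_mul_iff_right₀ hsp]
      have hexp : (-s) * ((X : Mn n).trace.re + (-s)⁻¹ * (⟪y0, b⟫ - ⟪y0, 𝒜 X⟫))
          = (-s) * (X : Mn n).trace.re + (⟪y0, b⟫ - ⟪y0, 𝒜 X⟫) := by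
        rw [mul_add, ← mul_assoc, mul_inv_cancel₀ hsp.ne', one_mul]
      rw [hexp]
      nlinarith [hu, h1, hb0]
    have hzD : (z : EReal) ≤ D := by
      refine le_iSup_of_le y (le_iInf fun X => le_iInf fun hX => ?_)
      exact_mod_cast hy X hX
    exact absurd (hzD.trans_lt hz1) (lt_irrefl _)
  exact le_antisymm strong weak
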